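/- Suppose every element of the ideal class group of 𝒪_K is its own inverse (equivalently, the class group has exponent dividing 2; this is the 'one class per genus' condition). Then any two nonzero ideals I and J of 𝒪_K with the same absolute norm lie in the same ideal class. Consequently, if some ideal of absolute norm n lies in a class C, then every ideal of absolute norm n lies in C, i.e. the number of ideals of norm n in the class C equals the total number of ideals of norm n. -/

import Mathlib

open NumberField Ideal nonZeroDivisors

section Aux
variable {K : Type} [Field K] [NumberField K]


theorem aux_absNorm_mul' (D C : Ideal (𝓞 K)) :
    Ideal.absNorm (D * C) = Ideal.absNorm D * Ideal.absNorm C :=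
  map_mul Ideal.absNorm D C

theorem nat_sq_dvd {n q : ℕ} (hq : q.Prime) (hn : IsSquare n) (h : q ∣ n) : q ^ 2 ∣ n := by
  obtain ⟨k, rfl⟩ := hn
  have hk : q ∣ k := (hq.dvd_mul.mp h).elim id id
  obtain ⟨t, rfl⟩ := hk
  exact ⟨t * t, by ring⟩

theorem nat_sq_quot {m q : ℕ} (hq : q.Prime) (hn : IsSquare (q ^ 2 * m)) : IsSquare m := by
  obtain ⟨k, hk⟩ := hn
  have hqk : q ∣ k := by
    have h1 : q ∣ k * k := by
      rw [← hk]; exact ⟨q * m, by ring⟩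
    exact (hq.dvd_mul.mp h1).elim id id
  obtain ⟨t, rfl⟩ := hqk
  refine ⟨t, ?_⟩
  have h2 : q ^ 2 * m = q ^ 2 * (t * t) := by rw [hk]; ring
  exact Nat.eq_of_mul_eq_mul_left (pow_pos hq.pos 2) h2

theorem aux_over
    {P : Ideal (𝓞 K)} (hP : P.IsPrime) (hP0 : P ≠ ⊥) :
    ∃ q : ℕ, q.Prime ∧ (q : 𝓞 K) ∈ P ∧ q ∣ Ideal.absNorm P := by
  have hPn : Ideal.absNorm P ≠ 0 := by
    rwa [ne_eq, Ideal.absNorm_eq_zero_iff]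
  have hcp : (P.comap (algebraMap ℤ (𝓞 K))).IsPrime := hP.comap _
  obtain ⟨a, ha⟩ : Submodule.IsPrincipal (P.comap (algebraMap ℤ (𝓞 K))) := inferInstance
  have hmem : ((Ideal.absNorm P : ℤ)) ∈ P.comap (algebraMap ℤ (𝓞 K)) := by
    simp only [Ideal.mem_comap, map_natCast]
    exact Ideal.absNorm_mem P
  have ha2 : P.comap (algebraMap ℤ (𝓞 K)) = Ideal.span {a} := ha
  rw [ha2] at hmem hcp
  clear ha; have ha := ha2
  rw [Ideal.span_singleton_prime ?_] at hcp
  · refine ⟨a.natAbs, Int.prime_iff_natAbs_prime.mp hcp, ?_, ?_⟩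
    · have : algebraMap ℤ (𝓞 K) a ∈ P := by
        have : a ∈ P.comap (algebraMap ℤ (𝓞 K)) := by rw [ha]; exact Ideal.mem_span_singleton_self a
        simpa using this
      rcases Int.natAbs_eq a with h | h
      · rw [show ((a.natAbs : 𝓞 K)) = algebraMap ℤ (𝓞 K) a by rw [← map_natCast (algebraMap ℤ (𝓞 K))]; congr 1; omega]
        exact this
      · rw [show ((a.natAbs : 𝓞 K)) = -algebraMap ℤ (𝓞 K) a by rw [← map_natCast (algebraMap ℤ (𝓞 K))]; rw [← map_neg]; congr 1; omega]
        exact P.neg_mem this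
    · have := Ideal.mem_span_singleton.mp hmem
      exact Int.natCast_dvd_natCast.mp (Int.natAbs_dvd.mpr this)
  · rintro rfl
    rw [Ideal.span_singleton_eq_bot.mpr rfl] at hmem
    simp only [Ideal.mem_bot, Int.natCast_eq_zero] at hmem
    exact hPn hmem

theorem aux_mk0_mul {I J : Ideal (𝓞 K)} (hI : I ∈ (Ideal (𝓞 K))⁰) (hJ : J ∈ (Ideal (𝓞 K))⁰)
    (hIJ : I * J ∈ (Ideal (𝓞 K))⁰) :
    ClassGroup.mk0 ⟨I * J, hIJ⟩ = ClassGroup.mk0 ⟨I, hI⟩ * ClassGroup.mk0 ⟨J, hJ⟩ := by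
  rw [show (⟨I * J, hIJ⟩ : (Ideal (𝓞 K))⁰) = ⟨I, hI⟩ * ⟨J, hJ⟩ from rfl]
  exact MonoidHom.map_mul ClassGroup.mk0 _ _

theorem aux_exists_prime_factor (n : ℕ) {q : ℕ} (hq : q.Prime) :
    ∀ {B : Ideal (𝓞 K)}, B ≠ ⊥ → q ∣ Ideal.absNorm B → Ideal.absNorm B = n →
    ∃ P : Ideal (𝓞 K), Prime P ∧ P ∣ B ∧ q ∣ Ideal.absNorm P := by
  induction n using Nat.strong_induction_on with
  | _ n ih =>
  intro B hB hdvd hn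
  have h0 : Ideal.absNorm B ≠ 0 := by rwa [ne_eq, Ideal.absNorm_eq_zero_iff]
  subst hn
  have hBtop : B ≠ ⊤ := by
    rintro rfl
    rw [Ideal.absNorm_top] at hdvd
    exact hq.one_lt.ne' (Nat.eq_one_of_dvd_one hdvd ▸ rfl)
  obtain ⟨P, hPirr, hPdvd⟩ := WfDvdMonoid.exists_irreducible_factor
    (by rwa [Ideal.isUnit_iff]) hB
  have hPprime : Prime P := UniqueFactorizationMonoid.irreducible_iff_prime.mp hPirr
  obtain ⟨C, rfl⟩ := hPdvd
  rw [aux_absNorm_mul'] at hdvd h0 ih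
  rcases hq.dvd_mul.mp hdvd with h | h
  · exact ⟨P, hPprime, Dvd.intro C rfl, h⟩
  · have hC0 : C ≠ ⊥ := by rintro rfl; simp at h0
    have hPn : 1 < Ideal.absNorm P := by
      rcases Nat.lt_or_ge (Ideal.absNorm P) 2 with hlt | hge
      · interval_cases h : Ideal.absNorm P
        · simp at h0
        · rw [Ideal.absNorm_eq_one_iff] at h
          exact absurd (Ideal.isUnit_iff.mpr h) hPirr.not_isUnit
      · exact hge
    have hlt : Ideal.absNorm C < Ideal.absNorm P * Ideal.absNorm C := by
      have : 0 < Ideal.absNorm C := Nat.pos_of_ne_zero (by rintro h'; simp [h'] at h0)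
      calc Ideal.absNorm C = 1 * Ideal.absNorm C := by ring
      _ < Ideal.absNorm P * Ideal.absNorm C := by exact (Nat.mul_lt_mul_right this).mpr hPn
    obtain ⟨Q, hQ1, hQ2, hQ3⟩ := ih _ hlt hC0 h rfl
    exact ⟨Q, hQ1, hQ2.trans (Dvd.intro_left P rfl), hQ3⟩

theorem aux_norm_span (hdeg : Module.finrank ℚ K = 2) (q : ℕ) :
    Ideal.absNorm (Ideal.span {(q : 𝓞 K)}) = q ^ 2 := by
  have b := Module.Free.chooseBasis ℤ (𝓞 K)
  have hc : Fintype.card (Module.Free.ChooseBasisIndex ℤ (𝓞 K)) = 2 := by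
    rw [← Module.finrank_eq_card_chooseBasisIndex, RingOfIntegers.rank, hdeg]
  rw [Ideal.absNorm_span_singleton]
  rw [show ((q : 𝓞 K)) = algebraMap ℤ (𝓞 K) (q : ℤ) by simp]
  rw [Algebra.norm_algebraMap_of_basis b, hc]
  simp [Int.natAbs_pow]

theorem aux_eq_of_dvd {D E : Ideal (𝓞 K)} (h : D ∣ E) (hn : Ideal.absNorm D = Ideal.absNorm E)
    (hE : E ≠ ⊥) : D = E := by
  obtain ⟨C, rfl⟩ := h
  have h0 : Ideal.absNorm D ≠ 0 := by
    rw [ne_eq, Ideal.absNorm_eq_zero_iff]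
    rintro rfl; exact hE (by simp)
  rw [aux_absNorm_mul'] at hn
  have : Ideal.absNorm C = 1 := by
    nlinarith [Nat.pos_of_ne_zero h0, Nat.one_le_iff_ne_zero.mpr h0]
  rw [Ideal.absNorm_eq_one_iff] at this
  rw [this, Ideal.mul_top]

theorem aux_dvd_span {P : Ideal (𝓞 K)} {q : ℕ} (h : (q : 𝓞 K) ∈ P) :
    P ∣ Ideal.span {(q : 𝓞 K)} :=
  Ideal.dvd_iff_le.mpr ((Ideal.span_singleton_le_iff_mem _).mpr h)

-- given prime P with q ∈ P, q prime: absNorm P ∣ q ^ 2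
theorem aux_norm_dvd (hdeg : Module.finrank ℚ K = 2) {P : Ideal (𝓞 K)} {q : ℕ}
    (h : (q : 𝓞 K) ∈ P) : Ideal.absNorm P ∣ q ^ 2 :=
  (aux_norm_span hdeg q) ▸ Ideal.absNorm_dvd_absNorm_of_le ((Ideal.span_singleton_le_iff_mem _).mpr h)

theorem aux_key (hdeg : Module.finrank ℚ K = 2)
    (hexp : ∀ C : ClassGroup (𝓞 K), C⁻¹ = C) (n : ℕ) :
    ∀ {A : Ideal (𝓞 K)} (hA : A ≠ 0), Ideal.absNorm A = n → IsSquare n →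
      ClassGroup.mk0 ⟨A, mem_nonZeroDivisors_of_ne_zero hA⟩ = 1 := by
  have hsq2 : ∀ C : ClassGroup (𝓞 K), C * C = 1 := fun C => by
    have h := inv_mul_cancel C
    rwa [hexp] at h
  induction n using Nat.strong_induction_on with
  | _ n ih =>
  intro A hA hn hsqn
  have hAb : A ≠ ⊥ := by rwa [← Submodule.zero_eq_bot]
  have h0 : Ideal.absNorm A ≠ 0 := by rwa [ne_eq, Ideal.absNorm_eq_zero_iff]
  by_cases hAtop : A = ⊤
  · rw [ClassGroup.mk0_eq_one_iff]
    exact ⟨⟨1, by rw [hAtop]; exact (Ideal.span_singleton_one).symm⟩⟩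
  -- get an irreducible (prime) factor P of A
  obtain ⟨P, hPirr, B, rfl⟩ := WfDvdMonoid.exists_irreducible_factor
    (by rwa [Ideal.isUnit_iff]) hAb
  have hPprime : Prime P := UniqueFactorizationMonoid.irreducible_iff_prime.mp hPirr
  have hPb : P ≠ ⊥ := hPprime.ne_zero
  have hBb : B ≠ (⊥ : Ideal (𝓞 K)) := by rintro rfl; exact hA (by simp)
  have hP0 : Ideal.absNorm P ≠ 0 := by rwa [ne_eq, Ideal.absNorm_eq_zero_iff]
  have hB0 : Ideal.absNorm B ≠ 0 := by rwa [ne_eq, Ideal.absNorm_eq_zero_iff]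
  have hPisP : P.IsPrime := Ideal.isPrime_of_prime hPprime
  obtain ⟨q, hq, hqP, hqdvd⟩ := aux_over hPisP hPb
  have hPq2 : Ideal.absNorm P ∣ q ^ 2 := aux_norm_dvd hdeg hqP
  have hspan0 : Ideal.span {(q : 𝓞 K)} ≠ ⊥ := by
    rw [ne_eq, ← Ideal.absNorm_eq_zero_iff, aux_norm_span hdeg]
    exact pow_ne_zero 2 hq.pos.ne'
  -- absNorm P = q or q^2
  obtain ⟨m, hm2, hPm⟩ := (Nat.dvd_prime_pow hq).mp hPq2
  have hm0 : m ≠ 0 := by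
    rintro rfl
    rw [pow_zero] at hPm
    exact hq.one_lt.ne' (Nat.eq_one_of_dvd_one (hPm ▸ hqdvd))
  have hmul : Ideal.absNorm (P * B) = Ideal.absNorm P * Ideal.absNorm B := aux_absNorm_mul' P B
  have hm1 : 1 ≤ m := Nat.one_le_iff_ne_zero.mpr hm0
  interval_cases m
  · -- absNorm P = q : the interesting case
    rw [pow_one] at hPm
    -- q² ∣ absNorm (P*B) hence q ∣ absNorm B
    have hq2A : q ^ 2 ∣ Ideal.absNorm (P * B) := nat_sq_dvd hq (hn ▸ hsqn) (by
      rw [hmul, ← hPm]; exact Dvd.intro _ rfl)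
    have hqB : q ∣ Ideal.absNorm B := by
      have : q * q ∣ q * Ideal.absNorm B := by
        rw [← hPm] at hq2A ⊢
        rwa [hmul, pow_two] at hq2A
      exact (Nat.mul_dvd_mul_iff_left hq.pos).mp this
    by_cases hPB : P ∣ B
    · -- A = P^2 * B₂
      obtain ⟨B₂, rfl⟩ := hPB
      have hB₂b : B₂ ≠ (⊥ : Ideal (𝓞 K)) := by rintro rfl; exact hA (by simp)
      have hB₂0 : Ideal.absNorm B₂ ≠ 0 := by rwa [ne_eq, Ideal.absNorm_eq_zero_iff]
      have hns : Ideal.absNorm (P * (P * B₂)) = q ^ 2 * Ideal.absNorm B₂ := by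
        rw [aux_absNorm_mul', aux_absNorm_mul', hPm]; ring
      have hlt : Ideal.absNorm B₂ < n := by
        rw [← hn, hns]
        have := Nat.one_lt_pow (n := 2) (by norm_num) hq.one_lt
        calc Ideal.absNorm B₂ = 1 * Ideal.absNorm B₂ := by ring
        _ < q ^ 2 * Ideal.absNorm B₂ := by
            exact (Nat.mul_lt_mul_right (Nat.pos_of_ne_zero hB₂0)).mpr this
      have hsqB₂ : IsSquare (Ideal.absNorm B₂) := by
        refine nat_sq_quot hq ?_
        rw [← hns, hn]; exact hsqn
      have e1 := aux_mk0_mul (mem_nonZeroDivisors_of_ne_zero (show P ≠ 0 from hPb))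
        (mem_nonZeroDivisors_of_ne_zero (show P * B₂ ≠ 0 from hBb))
        (mem_nonZeroDivisors_of_ne_zero hA)
      have e2 := aux_mk0_mul (mem_nonZeroDivisors_of_ne_zero (show P ≠ 0 from hPb))
        (mem_nonZeroDivisors_of_ne_zero (show B₂ ≠ 0 from hB₂b))
        (mem_nonZeroDivisors_of_ne_zero (show P * B₂ ≠ 0 from hBb))
      rw [e1, e2, ← mul_assoc, hsq2, one_mul]
      exact ih _ hlt hB₂b rfl hsqB₂
    · -- find another prime Q over q dividing B
      obtain ⟨Q, hQpr, hQB, hqQ⟩ := aux_exists_prime_factor (Ideal.absNorm B) hq hBb hqB rfl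
      have hQisP : Q.IsPrime := Ideal.isPrime_of_prime hQpr
      have hQb : Q ≠ ⊥ := hQpr.ne_zero
      obtain ⟨q', hq', hq'Q, hq'dvd⟩ := aux_over hQisP hQb
      have hQq'2 : Ideal.absNorm Q ∣ q' ^ 2 := aux_norm_dvd hdeg hq'Q
      have hqq' : q = q' := by
        have : q ∣ q' ^ 2 := hqQ.trans hQq'2
        have := hq.dvd_of_dvd_pow this
        exact (Nat.prime_dvd_prime_iff_eq hq hq').mp this
      subst hqq'
      obtain ⟨m', hm'2, hQm⟩ := (Nat.dvd_prime_pow hq).mp hQq'2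
      have hm'0 : m' ≠ 0 := by
        rintro rfl
        rw [pow_zero] at hQm
        exact hq.one_lt.ne' (Nat.eq_one_of_dvd_one (hQm ▸ hqQ))
      have hm'1 : 1 ≤ m' := Nat.one_le_iff_ne_zero.mpr hm'0
      interval_cases m'
      · -- absNorm Q = q, Q ≠ P, P*Q = span {q}
        rw [pow_one] at hQm
        have hQP : Q ≠ P := by rintro rfl; exact hPB hQB
        have hPQspan : P * Q ∣ Ideal.span {(q : 𝓞 K)} := by
          obtain ⟨C, hC⟩ := aux_dvd_span hqP
          have hQC : Q ∣ C := by
            have : Q ∣ P * C := by rw [← hC]; exact aux_dvd_span hq'Q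
            rcases hQpr.dvd_mul.mp this with h | h
            · exact absurd ((associated_iff_eq.mp (hQpr.irreducible.associated_of_dvd hPirr h))) hQP
            · exact h
          obtain ⟨D, rfl⟩ := hQC
          exact ⟨D, by rw [hC]; ring⟩
        have hPQ : P * Q = Ideal.span {(q : 𝓞 K)} := by
          refine aux_eq_of_dvd hPQspan ?_ hspan0
          rw [aux_absNorm_mul', hPm, hQm, aux_norm_span hdeg, pow_two]
        obtain ⟨B₂, rfl⟩ := hQB
        have hB₂b : B₂ ≠ (⊥ : Ideal (𝓞 K)) := by rintro rfl; exact hA (by simp)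
        have hB₂0 : Ideal.absNorm B₂ ≠ 0 := by rwa [ne_eq, Ideal.absNorm_eq_zero_iff]
        have hre : P * (Q * B₂) = (P * Q) * B₂ := by ring
        have hPQb : P * Q ≠ (⊥ : Ideal (𝓞 K)) := by
          rw [hPQ]; exact hspan0
        have e1 : ClassGroup.mk0 ⟨P * (Q * B₂), mem_nonZeroDivisors_of_ne_zero hA⟩
            = ClassGroup.mk0 ⟨(P * Q) * B₂,
                mem_nonZeroDivisors_of_ne_zero (show (P*Q)*B₂ ≠ 0 by rw [← hre]; exact hA)⟩ := by
          congr 1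
          exact Subtype.ext hre
        have e2 := aux_mk0_mul (mem_nonZeroDivisors_of_ne_zero (show P * Q ≠ 0 from hPQb))
          (mem_nonZeroDivisors_of_ne_zero (show B₂ ≠ 0 from hB₂b))
          (mem_nonZeroDivisors_of_ne_zero (show (P*Q)*B₂ ≠ 0 by rw [← hre]; exact hA))
        have e3 : ClassGroup.mk0 ⟨P * Q, mem_nonZeroDivisors_of_ne_zero (show P * Q ≠ 0 from hPQb)⟩ = 1 := by
          rw [ClassGroup.mk0_eq_one_iff, hPQ]
          exact ⟨⟨_, rfl⟩⟩
        rw [e1, e2, e3, one_mul]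
        have hns : Ideal.absNorm (P * (Q * B₂)) = q ^ 2 * Ideal.absNorm B₂ := by
          rw [aux_absNorm_mul', aux_absNorm_mul', hPm, hQm]; ring
        have hlt : Ideal.absNorm B₂ < n := by
          rw [← hn, hns]
          have := Nat.one_lt_pow (n := 2) (by norm_num) hq.one_lt
          calc Ideal.absNorm B₂ = 1 * Ideal.absNorm B₂ := by ring
          _ < q ^ 2 * Ideal.absNorm B₂ := by
              exact (Nat.mul_lt_mul_right (Nat.pos_of_ne_zero hB₂0)).mpr this
        have hsqB₂ : IsSquare (Ideal.absNorm B₂) := by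
          refine nat_sq_quot hq ?_
          rw [← hns, hn]; exact hsqn
        exact ih _ hlt hB₂b rfl hsqB₂
      · -- absNorm Q = q², Q = span {q}, so P ∣ Q ∣ B: contradiction
        exfalso
        have hQspan : Q = Ideal.span {(q : 𝓞 K)} := by
          refine aux_eq_of_dvd (aux_dvd_span hq'Q) ?_ hspan0
          rw [hQm, aux_norm_span hdeg]
        exact hPB (dvd_trans (hQspan ▸ aux_dvd_span hqP) hQB)
  · -- absNorm P = q² : P = span {q} is principal
    have hPspan : P = Ideal.span {(q : 𝓞 K)} := by
      refine aux_eq_of_dvd (aux_dvd_span hqP) ?_ hspan0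
      rw [hPm, aux_norm_span hdeg]
    have e2 := aux_mk0_mul (mem_nonZeroDivisors_of_ne_zero (show P ≠ 0 from hPb))
      (mem_nonZeroDivisors_of_ne_zero (show B ≠ 0 from hBb))
      (mem_nonZeroDivisors_of_ne_zero hA)
    have e3 : ClassGroup.mk0 ⟨P, mem_nonZeroDivisors_of_ne_zero (show P ≠ 0 from hPb)⟩ = 1 := by
      rw [ClassGroup.mk0_eq_one_iff, hPspan]
      exact ⟨⟨_, rfl⟩⟩
    rw [e2, e3, one_mul]
    have hns : Ideal.absNorm (P * B) = q ^ 2 * Ideal.absNorm B := by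
      rw [aux_absNorm_mul', hPm]
    have hlt : Ideal.absNorm B < n := by
      rw [← hn, hns]
      have := Nat.one_lt_pow (n := 2) (by norm_num) hq.one_lt
      calc Ideal.absNorm B = 1 * Ideal.absNorm B := by ring
      _ < q ^ 2 * Ideal.absNorm B := by
          exact (Nat.mul_lt_mul_right (Nat.pos_of_ne_zero hB0)).mpr this
    have hsqB : IsSquare (Ideal.absNorm B) := by
      refine nat_sq_quot hq ?_
      rw [← hns, hn]; exact hsqn
    exact ih _ hlt hBb rfl hsqB

end Aux
theorem stmt14 (K : Type) [Field K] [NumberField K]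
    (hdeg : Module.finrank ℚ K = 2)
    (himg : ∀ v : InfinitePlace K, v.IsComplex)
    (hexp : ∀ C : ClassGroup (𝓞 K), C⁻¹ = C) :
    (∀ (I J : Ideal (𝓞 K)) (hI : I ≠ 0) (hJ : J ≠ 0),
        Ideal.absNorm I = Ideal.absNorm J →
        ClassGroup.mk0 ⟨I, mem_nonZeroDivisors_of_ne_zero hI⟩ =
          ClassGroup.mk0 ⟨J, mem_nonZeroDivisors_of_ne_zero hJ⟩) ∧
    (∀ (n : ℕ) (C : ClassGroup (𝓞 K)),
        (∃ (I : Ideal (𝓞 K)) (hI : I ≠ 0), Ideal.absNorm I = n ∧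
          ClassGroup.mk0 ⟨I, mem_nonZeroDivisors_of_ne_zero hI⟩ = C) →
        Nat.card {I : Ideal (𝓞 K) // ∃ hI : I ≠ 0, Ideal.absNorm I = n ∧
            ClassGroup.mk0 ⟨I, mem_nonZeroDivisors_of_ne_zero hI⟩ = C} =
          Nat.card {I : Ideal (𝓞 K) // I ≠ 0 ∧ Ideal.absNorm I = n}) := by
  have main : ∀ (I J : Ideal (𝓞 K)) (hI : I ≠ 0) (hJ : J ≠ 0),
      Ideal.absNorm I = Ideal.absNorm J →
      ClassGroup.mk0 ⟨I, mem_nonZeroDivisors_of_ne_zero hI⟩ =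
        ClassGroup.mk0 ⟨J, mem_nonZeroDivisors_of_ne_zero hJ⟩ := by
    intro I J hI hJ hnorm
    have hIJ : I * J ≠ 0 := mul_ne_zero hI hJ
    have h1 : ClassGroup.mk0 ⟨I * J, mem_nonZeroDivisors_of_ne_zero hIJ⟩ = 1 := by
      refine aux_key hdeg hexp (Ideal.absNorm (I * J)) hIJ rfl ?_
      rw [aux_absNorm_mul', hnorm]
      exact ⟨Ideal.absNorm J, rfl⟩
    rw [aux_mk0_mul (mem_nonZeroDivisors_of_ne_zero hI)
      (mem_nonZeroDivisors_of_ne_zero hJ) (mem_nonZeroDivisors_of_ne_zero hIJ)] at h1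
    rw [← hexp (ClassGroup.mk0 ⟨J, mem_nonZeroDivisors_of_ne_zero hJ⟩)]
    exact eq_inv_of_mul_eq_one_left h1
  refine ⟨main, ?_⟩
  rintro n C ⟨I₀, hI₀, hn₀, hC₀⟩
  apply Nat.card_congr
  apply Equiv.subtypeEquivRight
  intro I
  constructor
  · rintro ⟨hI, hn, -⟩; exact ⟨hI, hn⟩
  · rintro ⟨hI, hn⟩
    exact ⟨hI, hn, by rw [main I I₀ hI hI₀ (by rw [hn, hn₀]), hC₀]⟩
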